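/- For every nonnegative integer k, Γ(k+5/6)·Γ(k+1)·Γ(k+4/3)·Γ(k+7/6)·Γ(k+3/2)·Γ(k+5/3) / Γ(2k+5/2) = π² · (6k+4)! · (2k+1)! / (2^{2k−1} · 3^{6k+9/2} · (4k+3)!). -/

import Mathlib

open Real

theorem wilson_norm (k : ℕ) :
    (Real.Gamma ((k : ℝ) + 5/6) * Real.Gamma ((k : ℝ) + 1) * Real.Gamma ((k : ℝ) + 4/3) *
      Real.Gamma ((k : ℝ) + 7/6) * Real.Gamma ((k : ℝ) + 3/2) * Real.Gamma ((k : ℝ) + 5/3)) /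
        Real.Gamma (2 * (k : ℝ) + 5/2) =
      Real.pi ^ 2 * (Nat.factorial (6 * k + 4)) * (Nat.factorial (2 * k + 1)) /
        ((2 : ℝ) ^ (2 * (k : ℝ) - 1) * (3 : ℝ) ^ (6 * (k : ℝ) + 9/2) *
          (Nat.factorial (4 * k + 3))) := by
  induction k with
  | zero =>
    simp only [Nat.cast_zero]
    have hab : Real.Gamma (1/6) * Real.Gamma (5/6) = 2 * π := by
      have h := Real.Gamma_mul_Gamma_one_sub (1/6 : ℝ)
      norm_num at h
      rw [show π * (1/6) = π/6 by ring, Real.sin_pi_div_six] at h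
      rw [h]; ring
    have hcd : Real.Gamma (1/3) * Real.Gamma (2/3) = 2 * π / Real.sqrt 3 := by
      have h := Real.Gamma_mul_Gamma_one_sub (1/3 : ℝ)
      norm_num at h
      rw [show π * (1/3) = π/3 by ring, Real.sin_pi_div_three] at h
      rw [h]; field_simp
    have h76 : Real.Gamma ((0:ℝ) + 7/6) = (1/6) * Real.Gamma (1/6) := by
      rw [show (0:ℝ) + 7/6 = 1/6 + 1 by norm_num, Real.Gamma_add_one (by norm_num)]
    have h43 : Real.Gamma ((0:ℝ) + 4/3) = (1/3) * Real.Gamma (1/3) := by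
      rw [show (0:ℝ) + 4/3 = 1/3 + 1 by norm_num, Real.Gamma_add_one (by norm_num)]
    have h53 : Real.Gamma ((0:ℝ) + 5/3) = (2/3) * Real.Gamma (2/3) := by
      rw [show (0:ℝ) + 5/3 = 2/3 + 1 by norm_num, Real.Gamma_add_one (by norm_num)]
    have h32 : Real.Gamma ((0:ℝ) + 3/2) = (1/2) * Real.sqrt π := by
      rw [show (0:ℝ) + 3/2 = 1/2 + 1 by norm_num, Real.Gamma_add_one (by norm_num),
        Real.Gamma_one_half_eq]
    have h52 : Real.Gamma (2 * (0:ℝ) + 5/2) = (3/4) * Real.sqrt π := by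
      rw [show 2*(0:ℝ) + 5/2 = (1/2 + 1) + 1 by norm_num, Real.Gamma_add_one (by norm_num),
        Real.Gamma_add_one (by norm_num), Real.Gamma_one_half_eq]
      ring
    have h1 : Real.Gamma ((0:ℝ) + 1) = 1 := by norm_num [Real.Gamma_one]
    have hpow2 : (2:ℝ) ^ (2 * (0:ℝ) - 1) = 1/2 := by
      rw [show 2*(0:ℝ) - 1 = (-1 : ℝ) by norm_num, Real.rpow_neg_one]; norm_num
    have hpow3 : (3:ℝ) ^ (6 * (0:ℝ) + 9/2) = 81 * Real.sqrt 3 := by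
      rw [show 6*(0:ℝ) + 9/2 = (4:ℕ) + (1/2 : ℝ) by norm_num, Real.rpow_add (by norm_num),
        Real.rpow_natCast, ← Real.sqrt_eq_rpow]
      norm_num
    rw [h76, h43, h53, h32, h52, h1, hpow2, hpow3]
    have hs3 : Real.sqrt 3 ≠ 0 := by positivity
    have hsp : Real.sqrt π ≠ 0 := by positivity
    have h3 : Real.sqrt 3 * Real.sqrt 3 = 3 := Real.mul_self_sqrt (by norm_num)
    rw [show (0:ℝ)+5/6 = 5/6 by norm_num]
    have habcd : Real.Gamma (5/6) * Real.Gamma (1/6) * Real.Gamma (1/3) * Real.Gamma (2/3) *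
        Real.sqrt 3 = 4 * π^2 := by
      have h2 : Real.Gamma (1/3) * Real.Gamma (2/3) * Real.sqrt 3 = 2 * π := by
        rw [hcd]; field_simp
      linear_combination (Real.Gamma (1/3) * Real.Gamma (2/3) * Real.sqrt 3) * hab + (2*π) * h2
    rw [div_eq_div_iff (by positivity) (by positivity)]
    norm_num [Nat.factorial]
    linear_combination ((9/2) * Real.sqrt π) * habcd
  | succ k ih =>
    have g1 : Real.Gamma (((k+1:ℕ):ℝ) + 5/6) = ((k:ℝ)+5/6) * Real.Gamma ((k:ℝ)+5/6) := by
      rw [show ((k+1:ℕ):ℝ) + 5/6 = ((k:ℝ)+5/6)+1 by push_cast; ring,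
        Real.Gamma_add_one (by positivity)]
    have g2 : Real.Gamma (((k+1:ℕ):ℝ) + 1) = ((k:ℝ)+1) * Real.Gamma ((k:ℝ)+1) := by
      rw [show ((k+1:ℕ):ℝ) + 1 = ((k:ℝ)+1)+1 by push_cast; ring,
        Real.Gamma_add_one (by positivity)]
    have g3 : Real.Gamma (((k+1:ℕ):ℝ) + 4/3) = ((k:ℝ)+4/3) * Real.Gamma ((k:ℝ)+4/3) := by
      rw [show ((k+1:ℕ):ℝ) + 4/3 = ((k:ℝ)+4/3)+1 by push_cast; ring,
        Real.Gamma_add_one (by positivity)]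
    have g4 : Real.Gamma (((k+1:ℕ):ℝ) + 7/6) = ((k:ℝ)+7/6) * Real.Gamma ((k:ℝ)+7/6) := by
      rw [show ((k+1:ℕ):ℝ) + 7/6 = ((k:ℝ)+7/6)+1 by push_cast; ring,
        Real.Gamma_add_one (by positivity)]
    have g5 : Real.Gamma (((k+1:ℕ):ℝ) + 3/2) = ((k:ℝ)+3/2) * Real.Gamma ((k:ℝ)+3/2) := by
      rw [show ((k+1:ℕ):ℝ) + 3/2 = ((k:ℝ)+3/2)+1 by push_cast; ring,
        Real.Gamma_add_one (by positivity)]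
    have g6 : Real.Gamma (((k+1:ℕ):ℝ) + 5/3) = ((k:ℝ)+5/3) * Real.Gamma ((k:ℝ)+5/3) := by
      rw [show ((k+1:ℕ):ℝ) + 5/3 = ((k:ℝ)+5/3)+1 by push_cast; ring,
        Real.Gamma_add_one (by positivity)]
    have g7 : Real.Gamma (2*((k+1:ℕ):ℝ) + 5/2) =
        ((2*(k:ℝ)+5/2)+1) * ((2*(k:ℝ)+5/2) * Real.Gamma (2*(k:ℝ)+5/2)) := by
      rw [show 2*((k+1:ℕ):ℝ) + 5/2 = ((2*(k:ℝ)+5/2)+1)+1 by push_cast; ring,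
        Real.Gamma_add_one (by positivity), Real.Gamma_add_one (by positivity)]
    have hf1 : (Nat.factorial (6*(k+1)+4) : ℝ) =
        (6*(k:ℝ)+10)*(6*(k:ℝ)+9)*(6*(k:ℝ)+8)*(6*(k:ℝ)+7)*(6*(k:ℝ)+6)*(6*(k:ℝ)+5)
          * (Nat.factorial (6*k+4)) := by
      rw [show 6*(k+1)+4 = 6*k+9+1 by ring, Nat.factorial_succ,
        show 6*k+9 = 6*k+8+1 by ring, Nat.factorial_succ,
        show 6*k+8 = 6*k+7+1 by ring, Nat.factorial_succ,
        show 6*k+7 = 6*k+6+1 by ring, Nat.factorial_succ,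
        show 6*k+6 = 6*k+5+1 by ring, Nat.factorial_succ,
        show 6*k+5 = 6*k+4+1 by ring, Nat.factorial_succ]
      push_cast; ring
    have hf2 : (Nat.factorial (2*(k+1)+1) : ℝ) =
        (2*(k:ℝ)+3)*(2*(k:ℝ)+2) * (Nat.factorial (2*k+1)) := by
      rw [show 2*(k+1)+1 = 2*k+2+1 by ring, Nat.factorial_succ,
        show 2*k+2 = 2*k+1+1 by ring, Nat.factorial_succ]
      push_cast; ring
    have hf3 : (Nat.factorial (4*(k+1)+3) : ℝ) =
        (4*(k:ℝ)+7)*(4*(k:ℝ)+6)*(4*(k:ℝ)+5)*(4*(k:ℝ)+4) * (Nat.factorial (4*k+3)) := by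
      rw [show 4*(k+1)+3 = 4*k+6+1 by ring, Nat.factorial_succ,
        show 4*k+6 = 4*k+5+1 by ring, Nat.factorial_succ,
        show 4*k+5 = 4*k+4+1 by ring, Nat.factorial_succ,
        show 4*k+4 = 4*k+3+1 by ring, Nat.factorial_succ]
      push_cast; ring
    have hp2 : (2:ℝ) ^ (2*((k+1:ℕ):ℝ)-1) = 4 * (2:ℝ) ^ (2*(k:ℝ)-1) := by
      rw [show 2*((k+1:ℕ):ℝ)-1 = (2*(k:ℝ)-1)+((2:ℕ):ℝ) by push_cast; ring,
        Real.rpow_add two_pos, Real.rpow_natCast]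
      norm_num; ring
    have hp3 : (3:ℝ) ^ (6*((k+1:ℕ):ℝ)+9/2) = 729 * (3:ℝ) ^ (6*(k:ℝ)+9/2) := by
      rw [show 6*((k+1:ℕ):ℝ)+9/2 = (6*(k:ℝ)+9/2)+((6:ℕ):ℝ) by push_cast; ring,
        Real.rpow_add (by norm_num), Real.rpow_natCast]
      norm_num; ring
    have hGden : (0:ℝ) < Real.Gamma (2*(k:ℝ)+5/2) := Real.Gamma_pos_of_pos (by positivity)
    have hfd : (0:ℝ) < (Nat.factorial (4*k+3) : ℝ) := by exact_mod_cast Nat.factorial_pos _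
    have ih' := (div_eq_div_iff (ne_of_gt hGden) (by positivity)).mp ih
    rw [g1, g2, g3, g4, g5, g6, g7, hf1, hf2, hf3, hp2, hp3,
      div_eq_div_iff (by positivity) (by positivity)]
    linear_combination (((k:ℝ)+5/6)*((k:ℝ)+1)*((k:ℝ)+4/3)*((k:ℝ)+7/6)*((k:ℝ)+3/2)*((k:ℝ)+5/3)
      * (2916 * ((4*(k:ℝ)+7)*(4*(k:ℝ)+6)*(4*(k:ℝ)+5)*(4*(k:ℝ)+4)))) * ih'
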